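/- Junction lemma for POMDPs: let p, p' ∈ Δ(K) and σ a strategy such that E^p_σ[lim_{n→∞}(1/n)∑_{m=1}^n g(k_m,i_m)] = v(p), where v = limsup_n v_n and each v_n is 1-Lipschitz for ‖·‖₁. Then E^{p'}_σ[liminf_{n→∞}(1/n)∑_{m=1}^n g(k_m,i_m)] ≥ v(p') − 2‖p − p'‖₁. -/
import Mathlib


open MeasureTheory Filter Topology

/-- junction lemma for POMDPs. With the play law from prior `p` given by
the mixture `∑_k p(k)·Q σ k` of the prior-independent conditional laws `Q σ k`, suppose
each `n`-stage value `v_n` is 1-Lipschitz for `‖·‖₁` and `v = limsup_n v_n`. If `σ` is a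
strategy from `p` whose Cesàro average payoffs converge a.s. with
`E^p_σ[lim (1/n)∑ g_m] = v(p)`, then
`E^{p'}_σ[liminf (1/n)∑ g_m] ≥ v(p') − 2‖p − p'‖₁`. -/
theorem pomdp_junction_lemma
    {K : Type*} [Fintype K] {Ω : Type*} [MeasurableSpace Ω] {S : Type*} [Nonempty S]
    (Q : S → K → Measure Ω) (hQ : ∀ σ k, IsProbabilityMeasure (Q σ k))
    (g : ℕ → Ω → ℝ) (hg : ∀ m, Measurable (g m))
    (hg01 : ∀ m ω, g m ω ∈ Set.Icc (0 : ℝ) 1)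
    (vN : ℕ → (K → ℝ) → ℝ) (v : (K → ℝ) → ℝ)
    (hvN : ∀ (n : ℕ) (q : K → ℝ), vN n q
      = ⨆ σ : S, ∫ ω, (1 / (n : ℝ)) * ∑ m ∈ Finset.Icc 1 n, g m ω
          ∂(∑ k, ENNReal.ofReal (q k) • Q σ k))
    (hv : ∀ q : K → ℝ, v q = limsup (fun n : ℕ => vN n q) atTop)
    (hvNLip : ∀ (n : ℕ), 1 ≤ n → ∀ q q' : K → ℝ,
      ((∀ k, 0 ≤ q k) ∧ ∑ k, q k = 1) → ((∀ k, 0 ≤ q' k) ∧ ∑ k, q' k = 1) →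
      |vN n q - vN n q'| ≤ ∑ k, |q k - q' k|)
    (p p' : K → ℝ)
    (hp : (∀ k, 0 ≤ p k) ∧ ∑ k, p k = 1) (hp' : (∀ k, 0 ≤ p' k) ∧ ∑ k, p' k = 1)
    (σ : S) (L : Ω → ℝ)
    (hL : ∀ᵐ ω ∂(∑ k, ENNReal.ofReal (p k) • Q σ k),
      Tendsto (fun n : ℕ => (1 / (n : ℝ)) * ∑ m ∈ Finset.Icc 1 n, g m ω) atTop
        (nhds (L ω)))
    (hLv : (∫ ω, L ω ∂(∑ k, ENNReal.ofReal (p k) • Q σ k)) = v p) :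
    (∫ ω, liminf (fun n : ℕ => (1 / (n : ℝ)) * ∑ m ∈ Finset.Icc 1 n, g m ω) atTop
        ∂(∑ k, ENNReal.ofReal (p' k) • Q σ k))
      ≥ v p' - 2 * ∑ k, |p k - p' k| := by
  obtain ⟨hp0, hp1⟩ := hp
  obtain ⟨hp'0, hp'1⟩ := hp'
  set D : ℝ := ∑ k, |p k - p' k| with hD
  have hD0 : 0 ≤ D := Finset.sum_nonneg fun k _ => abs_nonneg _
  set A : ℕ → Ω → ℝ := fun n ω => (1 / (n : ℝ)) * ∑ m ∈ Finset.Icc 1 n, g m ω with hAdef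
  set F : Ω → ℝ := fun ω => liminf (fun n : ℕ => A n ω) atTop with hFdef
  -- pointwise bounds on A
  have hA0 : ∀ n ω, 0 ≤ A n ω := by
    intro n ω
    have : (0:ℝ) ≤ ∑ m ∈ Finset.Icc 1 n, g m ω :=
      Finset.sum_nonneg fun m _ => (hg01 m ω).1
    positivity
  have hA1 : ∀ n ω, A n ω ≤ 1 := by
    intro n ω
    rcases Nat.eq_zero_or_pos n with hn | hn
    · simp [hAdef, hn]
    · have hsum : ∑ m ∈ Finset.Icc 1 n, g m ω ≤ (n : ℝ) := by
        calc ∑ m ∈ Finset.Icc 1 n, g m ω ≤ ∑ m ∈ Finset.Icc 1 n, (1:ℝ) :=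
              Finset.sum_le_sum fun m _ => (hg01 m ω).2
          _ = (n : ℝ) := by simp [Nat.card_Icc]
      have hnpos : (0:ℝ) < n := by exact_mod_cast hn
      rw [hAdef]
      calc (1 / (n:ℝ)) * ∑ m ∈ Finset.Icc 1 n, g m ω
          ≤ (1 / (n:ℝ)) * (n:ℝ) := by
            apply mul_le_mul_of_nonneg_left hsum (by positivity)
        _ = 1 := by field_simp
  -- bounds on F
  have hF0 : ∀ ω, 0 ≤ F ω := by
    intro ω
    have hb : IsBoundedUnder (· ≤ ·) atTop (fun n : ℕ => A n ω) :=
      isBoundedUnder_of_eventually_le (a := 1) (Eventually.of_forall fun n => hA1 n ω)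
    exact le_liminf_of_le hb.isCoboundedUnder_ge (Eventually.of_forall fun n => hA0 n ω)
  have hF1 : ∀ ω, F ω ≤ 1 := by
    intro ω
    have hb : IsBoundedUnder (· ≤ ·) atTop (fun n : ℕ => A n ω) :=
      isBoundedUnder_of_eventually_le (a := 1) (Eventually.of_forall fun n => hA1 n ω)
    have hfreq : ∃ᶠ n : ℕ in atTop, A n ω ≤ 1 := Frequently.of_forall fun n => hA1 n ω
    exact liminf_le_of_frequently_le hfreq
      (isBoundedUnder_of_eventually_ge (a := 0) (Eventually.of_forall fun n => hA0 n ω))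
  -- measurability and integrability
  have hAmeas : ∀ n, Measurable (A n) := fun n =>
    measurable_const.mul (Finset.measurable_sum _ fun m _ => hg m)
  have hFmeas : Measurable F := Measurable.liminf hAmeas
  have hbd_int : ∀ (f : Ω → ℝ), Measurable f → (∀ ω, 0 ≤ f ω) → (∀ ω, f ω ≤ 1) →
      ∀ (μ : Measure Ω), IsFiniteMeasure μ → Integrable f μ := by
    intro f hf hf0 hf1 μ hμ
    refine Integrable.mono' (integrable_const 1) hf.aestronglyMeasurable ?_
    filter_upwards with ω
    rw [Real.norm_eq_abs, abs_of_nonneg (hf0 ω)]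
    exact hf1 ω
  -- integral bounds over probability measures
  have hint_mem : ∀ (f : Ω → ℝ), Measurable f → (∀ ω, 0 ≤ f ω) → (∀ ω, f ω ≤ 1) →
      ∀ (μ : Measure Ω), IsProbabilityMeasure μ →
      (0 ≤ ∫ ω, f ω ∂μ ∧ ∫ ω, f ω ∂μ ≤ 1) := by
    intro f hf hf0 hf1 μ hμ
    constructor
    · exact integral_nonneg hf0
    · calc ∫ ω, f ω ∂μ ≤ ∫ _, (1:ℝ) ∂μ :=
            integral_mono (hbd_int f hf hf0 hf1 μ inferInstance) (integrable_const 1) hf1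
        _ = 1 := by simp
  -- mixture measures are probability measures
  have hmix : ∀ (q : K → ℝ), (∀ k, 0 ≤ q k) → (∑ k, q k = 1) → ∀ σ' : S,
      IsProbabilityMeasure (∑ k, ENNReal.ofReal (q k) • Q σ' k) := by
    intro q hq0 hq1 σ'
    constructor
    rw [Measure.finset_sum_apply]
    have : ∀ k ∈ Finset.univ, (ENNReal.ofReal (q k) • Q σ' k) Set.univ
        = ENNReal.ofReal (q k) := by
      intro k _
      have := (hQ σ' k).measure_univ
      simp [Measure.smul_apply, this]
    rw [Finset.sum_congr rfl this, ← ENNReal.ofReal_sum_of_nonneg fun k _ => hq0 k, hq1]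
    simp
  -- decomposition of integrals over mixtures
  have hdec : ∀ (q : K → ℝ), (∀ k, 0 ≤ q k) →
      ∀ (f : Ω → ℝ), Measurable f → (∀ ω, 0 ≤ f ω) → (∀ ω, f ω ≤ 1) → ∀ σ' : S,
      ∫ ω, f ω ∂(∑ k, ENNReal.ofReal (q k) • Q σ' k)
        = ∑ k, q k * ∫ ω, f ω ∂(Q σ' k) := by
    intro q hq0 f hf hf0 hf1 σ'
    have hint : ∀ k : K, Integrable f (Q σ' k) := fun k => by
      haveI := hQ σ' k
      exact hbd_int f hf hf0 hf1 _ inferInstance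
    rw [integral_finset_sum_measure (fun k _ =>
      (hint k).smul_measure ENNReal.ofReal_ne_top)]
    refine Finset.sum_congr rfl fun k _ => ?_
    rw [integral_smul_measure, ENNReal.toReal_ofReal (hq0 k), smul_eq_mul]
  -- bounds on vN for probability vectors
  have hvNb : ∀ (q : K → ℝ), (∀ k, 0 ≤ q k) → (∑ k, q k = 1) → ∀ n : ℕ, 1 ≤ n →
      0 ≤ vN n q ∧ vN n q ≤ 1 := by
    intro q hq0 hq1 n _
    rw [hvN]
    have hb : ∀ σ' : S, 0 ≤ (∫ ω, A n ω ∂(∑ k, ENNReal.ofReal (q k) • Q σ' k)) ∧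
        (∫ ω, A n ω ∂(∑ k, ENNReal.ofReal (q k) • Q σ' k)) ≤ 1 := fun σ' =>
      hint_mem (A n) (hAmeas n) (hA0 n) (hA1 n) _ (hmix q hq0 hq1 σ')
    have hbdd : BddAbove (Set.range fun σ' : S =>
        ∫ ω, A n ω ∂(∑ k, ENNReal.ofReal (q k) • Q σ' k)) :=
      ⟨1, by rintro x ⟨σ', rfl⟩; exact (hb σ').2⟩
    constructor
    · exact le_trans (hb (Classical.arbitrary S)).1 (le_ciSup hbdd _)
    · exact ciSup_le fun σ' => (hb σ').2
  -- v is 1-Lipschitz between p and p'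
  have hvLip : v p' - v p ≤ D := by
    rw [hv, hv]
    have hub : ∀ᶠ n : ℕ in atTop, vN n p' ≤ vN n p + D := by
      filter_upwards [eventually_ge_atTop 1] with n hn
      have := hvNLip n hn p' p ⟨hp'0, hp'1⟩ ⟨hp0, hp1⟩
      have h1 : vN n p' - vN n p ≤ ∑ k, |p' k - p k| := le_trans (le_abs_self _) this
      have h2 : ∑ k, |p' k - p k| = D := by
        rw [hD]; exact Finset.sum_congr rfl fun k _ => abs_sub_comm _ _
      linarith
    have hbp : IsBoundedUnder (· ≤ ·) atTop (fun n : ℕ => vN n p) :=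
      isBoundedUnder_of_eventually_le (a := 1) (by
        filter_upwards [eventually_ge_atTop 1] with n hn
        exact (hvNb p hp0 hp1 n hn).2)
    have hcp : IsCoboundedUnder (· ≤ ·) atTop (fun n : ℕ => vN n p) :=
      (isBoundedUnder_of_eventually_ge (a := 0) (by
        filter_upwards [eventually_ge_atTop 1] with n hn
        exact (hvNb p hp0 hp1 n hn).1)).isCoboundedUnder_le
    have hcp' : IsCoboundedUnder (· ≤ ·) atTop (fun n : ℕ => vN n p') :=
      (isBoundedUnder_of_eventually_ge (a := 0) (by
        filter_upwards [eventually_ge_atTop 1] with n hn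
        exact (hvNb p' hp'0 hp'1 n hn).1)).isCoboundedUnder_le
    have hbpD : IsBoundedUnder (· ≤ ·) atTop (fun n : ℕ => vN n p + D) :=
      isBoundedUnder_of_eventually_le (a := 1 + D) (by
        filter_upwards [eventually_ge_atTop 1] with n hn
        have := (hvNb p hp0 hp1 n hn).2
        linarith)
    have h1 : limsup (fun n : ℕ => vN n p') atTop
        ≤ limsup (fun n : ℕ => vN n p + D) atTop :=
      limsup_le_limsup hub hcp' hbpD
    have h2 : limsup (fun n : ℕ => vN n p + D) atTop
        = limsup (fun n : ℕ => vN n p) atTop + D :=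
      limsup_add_const atTop (fun n : ℕ => vN n p) D hbp hcp
    linarith [h1, h2.le, h2.ge]
  -- F agrees a.e. with L under the p-mixture
  have hFL : F =ᵐ[∑ k, ENNReal.ofReal (p k) • Q σ k] L := by
    filter_upwards [hL] with ω hω
    exact hω.liminf_eq
  have hFint_p : ∫ ω, F ω ∂(∑ k, ENNReal.ofReal (p k) • Q σ k) = v p := by
    rw [integral_congr_ae hFL, hLv]
  -- decompose both integrals
  have hdecp := hdec p hp0 F hFmeas hF0 hF1 σ
  have hdecp' := hdec p' hp'0 F hFmeas hF0 hF1 σ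
  -- each conditional expectation lies in [0,1]
  have hI : ∀ k : K, 0 ≤ (∫ ω, F ω ∂(Q σ k)) ∧ (∫ ω, F ω ∂(Q σ k)) ≤ 1 := fun k =>
    hint_mem F hFmeas hF0 hF1 _ (hQ σ k)
  -- mixture comparison
  have hcomp : ∑ k, p k * (∫ ω, F ω ∂(Q σ k)) - ∑ k, p' k * (∫ ω, F ω ∂(Q σ k)) ≤ D := by
    rw [← Finset.sum_sub_distrib, hD]
    refine Finset.sum_le_sum fun k _ => ?_
    rw [← sub_mul]
    calc (p k - p' k) * (∫ ω, F ω ∂(Q σ k)) ≤ |(p k - p' k) * (∫ ω, F ω ∂(Q σ k))| :=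
          le_abs_self _
      _ = |p k - p' k| * |∫ ω, F ω ∂(Q σ k)| := abs_mul _ _
      _ ≤ |p k - p' k| * 1 := by
          apply mul_le_mul_of_nonneg_left _ (abs_nonneg _)
          rw [abs_of_nonneg (hI k).1]; exact (hI k).2
      _ = |p k - p' k| := mul_one _
  -- conclude
  show (∫ ω, F ω ∂(∑ k, ENNReal.ofReal (p' k) • Q σ k)) ≥ v p' - 2 * D
  rw [hdecp']
  rw [hdecp] at hFint_p
  linarith
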